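/- Let A and B be adjacency matrices of connected undirected graphs on the same N vertices, let τ₁, τ₂ > 0 satisfy τ₁·λ(A) > 1 and τ₂·λ(B) > 1, let x* satisfy the single-virus SIS fixed point equations for (A, τ₁) and y* the single-virus SIS fixed point equations for (B, τ₂), and suppose the coexistence conditions τ₁·λ(diag(1 − y*)·A) > 1 and τ₂·λ(diag(1 − x*)·B) > 1 hold. Then every coexistence equilibrium (x̂, ŷ) for (A, B, τ₁, τ₂) satisfies, for each node i, the strict inequalities x̂_i < x*_i·(1 − ŷ_i) and ŷ_i < y*_i·(1 − x̂_i). -/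

import Mathlib

open Matrix Finset

lemma sis_compare {N : ℕ} (A : Matrix (Fin N) (Fin N) ℝ) (τ : ℝ) (hτ : 0 < τ)
    (hA0 : ∀ i j, 0 ≤ A i j)
    (xs : Fin N → ℝ) (hxs1 : ∀ i, 0 < xs i ∧ xs i < 1)
    (hxs2 : ∀ i, ∑ j, A i j * xs j = xs i / (τ * (1 - xs i)))
    (x y : Fin N → ℝ) (hx : ∀ i, 0 < x i) (hy : ∀ i, 0 < y i)
    (hxy : ∀ i, x i + y i < 1)
    (heq : ∀ i, ∑ j, A i j * x j = x i / (τ * (1 - x i - y i))) :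
    ∀ i, x i < xs i * (1 - y i) := by
  intro i₀
  have hne : (Finset.univ : Finset (Fin N)).Nonempty := ⟨i₀, mem_univ i₀⟩
  obtain ⟨i, -, hmax⟩ := Finset.exists_max_image Finset.univ
    (fun j => x j / (xs j * (1 - y j))) hne
  set c : ℝ := x i / (xs i * (1 - y i)) with hc
  clear_value c
  have hden : ∀ j, 0 < xs j * (1 - y j) := fun j => by
    have h1 := (hxs1 j).1
    have h2 := hy j
    have h3 := hxy j
    have h4 := hx j
    nlinarith
  have hcpos : 0 < c := hc ▸ div_pos (hx i) (hden i)
  have hle : ∀ j, x j ≤ c * (xs j * (1 - y j)) := fun j => by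
    have := hmax j (mem_univ j)
    exact (div_le_iff₀ (hden j)).mp this
  have hlt : ∀ j, x j < c * xs j := fun j => by
    have h1 := hle j
    have h2 := hy j
    have h3 := (hxs1 j).1
    nlinarith [mul_pos (mul_pos hcpos h3) h2]
  have hdpos : 0 < 1 - x i - y i := by have := hxy i; linarith
  have hppos : 0 < τ * (1 - x i - y i) := mul_pos hτ hdpos
  have hsum_pos : 0 < ∑ j, A i j * x j := by
    rw [heq i]; exact div_pos (hx i) hppos
  have hexists : ∃ j, 0 < A i j := by
    obtain ⟨j, -, hj⟩ := Finset.exists_ne_zero_of_sum_ne_zero (ne_of_gt hsum_pos)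
    refine ⟨j, lt_of_le_of_ne (hA0 i j) ?_⟩
    intro h; exact hj (by rw [← h]; ring)
  obtain ⟨j₀, hj₀⟩ := hexists
  have hstrict : ∑ j, A i j * x j < ∑ j, A i j * (c * xs j) := by
    apply Finset.sum_lt_sum
    · intro j _
      exact mul_le_mul_of_nonneg_left (le_of_lt (hlt j)) (hA0 i j)
    · exact ⟨j₀, mem_univ j₀, by
        have := hlt j₀; exact (mul_lt_mul_iff_right₀ hj₀).mpr this⟩
  have hsum_eq : ∑ j, A i j * (c * xs j) = c * (xs i / (τ * (1 - xs i))) := by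
    rw [← hxs2 i, Finset.mul_sum]
    apply Finset.sum_congr rfl
    intro j _; ring
  have hkey : x i / (τ * (1 - x i - y i)) < c * (xs i / (τ * (1 - xs i))) := by
    rw [← heq i, ← hsum_eq]; exact hstrict
  have hqpos : 0 < τ * (1 - xs i) := mul_pos hτ (by have := (hxs1 i).2; linarith)
  have hxi : x i = c * (xs i * (1 - y i)) := by
    rw [hc, div_mul_cancel₀ _ (ne_of_gt (hden i))]
  -- derive c < 1
  have hc1 : c < 1 := by
    rw [← mul_div_assoc, div_lt_div_iff₀ hppos hqpos] at hkey
    have h7 : (1 - y i) * (1 - xs i) < 1 - x i - y i := by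
      have hpos : 0 < c * xs i * τ := mul_pos (mul_pos hcpos (hxs1 i).1) hτ
      nlinarith [hkey, hxi, hpos]
    have h8 : x i < xs i * (1 - y i) := by
      nlinarith [h7, mul_pos (hxs1 i).1 (hy i)]
    rw [hc]
    exact (div_lt_one (hden i)).mpr h8
  calc x i₀ ≤ c * (xs i₀ * (1 - y i₀)) := hle i₀
    _ < 1 * (xs i₀ * (1 - y i₀)) := by
        exact (mul_lt_mul_of_pos_right hc1 (hden i₀))
    _ = xs i₀ * (1 - y i₀) := one_mul _

/-- Spectral radius of a real matrix: supremum of absolute values of its complex eigenvalues. -/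
noncomputable def specRad {N : ℕ} (M : Matrix (Fin N) (Fin N) ℝ) : ℝ :=
  sSup ((fun z => ‖z‖) '' spectrum ℂ (M.map Complex.ofReal))

/-- `A` is the adjacency matrix of a connected undirected graph:
symmetric, 0/1 entries, zero diagonal, and irreducible (connectivity). -/
def IsConnectedAdjMatrix {N : ℕ} (A : Matrix (Fin N) (Fin N) ℝ) : Prop :=
  A.IsSymm ∧ (∀ i j, A i j = 0 ∨ A i j = 1) ∧ (∀ i, A i i = 0) ∧
    (∀ i j, i ≠ j → ∃ k : ℕ, 0 < (A ^ k) i j)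

/-- `x` satisfies the single-virus SIS fixed point equations for `(A, τ)`. -/
def IsSISFixedPoint {N : ℕ} (A : Matrix (Fin N) (Fin N) ℝ) (τ : ℝ)
    (x : Fin N → ℝ) : Prop :=
  (∀ i, 0 < x i ∧ x i < 1) ∧ (∀ i, ∑ j, A i j * x j = x i / (τ * (1 - x i)))

/-- `(x, y)` is a coexistence equilibrium of the bi-SIS system for `(A, B, τ₁, τ₂)`. -/
def IsCoexistenceEq {N : ℕ} (A B : Matrix (Fin N) (Fin N) ℝ) (τ₁ τ₂ : ℝ)
    (x y : Fin N → ℝ) : Prop :=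
  (∀ i, 0 < x i) ∧ (∀ i, 0 < y i) ∧ (∀ i, x i + y i < 1) ∧
    (∀ i, ∑ j, A i j * x j = x i / (τ₁ * (1 - x i - y i))) ∧
    (∀ i, ∑ j, B i j * y j = y i / (τ₂ * (1 - x i - y i)))

/-- **Corollary 1.** Under the single-virus survival conditions
`τ₁·λ(A) > 1`, `τ₂·λ(B) > 1` and the coexistence conditions
`τ₁·λ(diag(1 − y*)·A) > 1`, `τ₂·λ(diag(1 − x*)·B) > 1`, every coexistence equilibrium
`(x̂, ŷ)` for `(A, B, τ₁, τ₂)` satisfies, for each node `i`, the strict inequalities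
`x̂_i < x*_i·(1 − ŷ_i)` and `ŷ_i < y*_i·(1 − x̂_i)`. -/
theorem coexistence_upper_bounds {N : ℕ}
    (A B : Matrix (Fin N) (Fin N) ℝ) (hA : IsConnectedAdjMatrix A) (hB : IsConnectedAdjMatrix B)
    (τ₁ τ₂ : ℝ) (hτ₁ : 0 < τ₁) (hτ₂ : 0 < τ₂)
    (hA1 : 1 < τ₁ * specRad A) (hB1 : 1 < τ₂ * specRad B)
    (xstar ystar : Fin N → ℝ)
    (hxs : IsSISFixedPoint A τ₁ xstar) (hys : IsSISFixedPoint B τ₂ ystar)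
    (hcoex1 : 1 < τ₁ * specRad (Matrix.diagonal (fun i => 1 - ystar i) * A))
    (hcoex2 : 1 < τ₂ * specRad (Matrix.diagonal (fun i => 1 - xstar i) * B))
    (xhat yhat : Fin N → ℝ)
    (hce : IsCoexistenceEq A B τ₁ τ₂ xhat yhat) :
    ∀ i, xhat i < xstar i * (1 - yhat i) ∧ yhat i < ystar i * (1 - xhat i) := by
  obtain ⟨hx, hy, hxy, heqA, heqB⟩ := hce
  have hA0 : ∀ i j, 0 ≤ A i j := fun i j => by rcases hA.2.1 i j with h | h <;> rw [h] <;> norm_num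
  have hB0 : ∀ i j, 0 ≤ B i j := fun i j => by rcases hB.2.1 i j with h | h <;> rw [h] <;> norm_num
  intro i
  constructor
  · exact sis_compare A τ₁ hτ₁ hA0 xstar hxs.1 hxs.2 xhat yhat hx hy hxy heqA i
  · refine sis_compare B τ₂ hτ₂ hB0 ystar hys.1 hys.2 yhat xhat hy hx
      (fun j => by have := hxy j; linarith) (fun j => ?_) i
    have h : (1 : ℝ) - yhat j - xhat j = 1 - xhat j - yhat j := by ring
    rw [h]; exact heqB j
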